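/- Let X be a metric space and φ : ℝ × X → X a continuous flow on X (φ(0, x) = x and φ(s + t, x) = φ(s, φ(t, x)) for all s, t ∈ ℝ and x ∈ X). Let K ⊆ X be a compact set invariant under the flow (φ(t, x) ∈ K for all x ∈ K and t ∈ ℝ), and let U be an open set with K ⊆ U, with compact closure, and isolating for K: every point p whose entire orbit {φ(t, p) : t ∈ ℝ} is contained in the closure of U belongs to K. Then there exists T > 1 such that for every p ∈ X and every τ ∈ [0, 1] with φ(τ, p) ∈ (closure U) \ U, there exists t ∈ ℝ with |t| ≤ T and φ(t, p) ∉ closure U. -/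
import Mathlib


/-- Uniform escape time for an isolated compact invariant set of a continuous flow: if
`K` is a compact invariant set of the flow `φ` and `U ⊇ K` is an open isolating
neighborhood with compact closure, then there is `T > 1` such that any trajectory
touching `(closure U) \ U` at some time `τ ∈ [0, 1]` leaves `closure U` at some time `t`
with `|t| ≤ T`. -/
theorem flow_escape_time {X : Type*} [MetricSpace X] (φ : ℝ × X → X)
    (hcont : Continuous φ)
    (h0 : ∀ x : X, φ (0, x) = x)
    (hadd : ∀ s t : ℝ, ∀ x : X, φ (s + t, x) = φ (s, φ (t, x)))
    (K : Set X) (hK : IsCompact K)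
    (hKinv : ∀ x ∈ K, ∀ t : ℝ, φ (t, x) ∈ K)
    (U : Set X) (hU : IsOpen U) (hKU : K ⊆ U) (hUc : IsCompact (closure U))
    (hiso : ∀ p : X, (∀ t : ℝ, φ (t, p) ∈ closure U) → p ∈ K) :
    ∃ T : ℝ, 1 < T ∧
      ∀ p : X, ∀ τ ∈ Set.Icc (0 : ℝ) 1, φ (τ, p) ∈ closure U \ U →
        ∃ t : ℝ, |t| ≤ T ∧ φ (t, p) ∉ closure U := by
  classical
  set B : Set X := closure U \ U with hB
  -- every point of B escapes
  have hesc : ∀ q : B, ∃ s : ℝ, φ (s, (q : X)) ∉ closure U := by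
    rintro ⟨q, hq⟩
    by_contra h
    push_neg at h
    exact hq.2 (hKU (hiso q h))
  choose s hs using hesc
  -- open cover of B
  set V : B → Set X := fun q => {x | φ (s q, x) ∉ closure U} with hV
  have hVopen : ∀ q : B, IsOpen (V q) := by
    intro q
    have : Continuous fun x : X => φ (s q, x) :=
      hcont.comp (continuous_const.prodMk continuous_id)
    exact (isClosed_closure.preimage this).isOpen_compl
  have hBcompact : IsCompact B :=
    hUc.of_isClosed_subset (isClosed_closure.inter hU.isClosed_compl)
      (by rw [hB, Set.diff_eq]; exact Set.inter_subset_left)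
  have hcover : B ⊆ ⋃ q : B, V q := fun x hx =>
    Set.mem_iUnion.2 ⟨⟨x, hx⟩, hs ⟨x, hx⟩⟩
  obtain ⟨F, hF⟩ := hBcompact.elim_finite_subcover V hVopen hcover
  -- uniform bound
  set S : ℝ := ∑ q ∈ F, |s q| with hS
  have hSle : ∀ q ∈ F, |s q| ≤ S :=
    fun q hq => Finset.single_le_sum (fun i _ => abs_nonneg (s i)) hq
  have hS0 : 0 ≤ S := Finset.sum_nonneg fun i _ => abs_nonneg (s i)
  refine ⟨S + 2, by linarith, ?_⟩
  intro p τ hτ hpB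
  have : φ (τ, p) ∈ ⋃ q ∈ F, V q := hF hpB
  simp only [Set.mem_iUnion] at this
  obtain ⟨q, hqF, hqV⟩ := this
  refine ⟨s q + τ, ?_, ?_⟩
  · calc |s q + τ| ≤ |s q| + |τ| := abs_add_le _ _
      _ ≤ S + 1 := add_le_add (hSle q hqF) (abs_le.2 ⟨le_trans (by norm_num) hτ.1, hτ.2⟩)
      _ ≤ S + 2 := by linarith
  · rw [hadd]
    exact hqV
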